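/- Let (D_A ⊆ A) and (D_B ⊆ B) be sub-C*-algebras with (D_B ⊆ B) nondegenerate, and let φ : A → B be a positive linear map. If φ maps normalizers of D_A to normalizers of D_B, then φ(D_A) ⊆ D_B. -/

import Mathlib

open Filter Topology

section Aux
variable {A : Type*} [NonUnitalCStarAlgebra A] [PartialOrder A] [StarOrderedRing A]

set_option linter.unusedSectionVars false in
lemma cfcnHom_mem (S : NonUnitalStarSubalgebra ℂ A) (hS : IsClosed (S : Set A))
    {a : A} (haS : a ∈ S) (ha : IsSelfAdjoint a) (f : ContinuousMapZero (quasispectrum ℝ a) ℝ) :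
    cfcₙHom (R := ℝ) ha f ∈ S := by
  let S' : NonUnitalStarSubalgebra ℝ A :=
    { carrier := S
      add_mem' := fun ha hb => add_mem ha hb
      mul_mem' := fun ha hb => mul_mem ha hb
      zero_mem' := zero_mem S
      smul_mem' := fun r x hx => by
        rw [← Complex.coe_smul]
        exact SMulMemClass.smul_mem _ hx
      star_mem' := fun hx => star_mem hx }
  have hcl : IsClosed ((cfcₙHom (R := ℝ) ha) ⁻¹' (S : Set A)) :=
    hS.preimage (cfcₙHom_isClosedEmbedding (R := ℝ) ha).continuous
  have hadj : (NonUnitalStarAlgebra.adjoin ℝ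
      {(ContinuousMapZero.id (quasispectrum ℝ a) : ContinuousMapZero (quasispectrum ℝ a) ℝ)} : Set _) ⊆
      (cfcₙHom (R := ℝ) ha) ⁻¹' (S : Set A) := by
    have hle : NonUnitalStarAlgebra.adjoin ℝ
        {(ContinuousMapZero.id (quasispectrum ℝ a) : ContinuousMapZero (quasispectrum ℝ a) ℝ)} ≤
        S'.comap (cfcₙHom (R := ℝ) ha) := by
      apply NonUnitalStarAlgebra.adjoin_le
      rw [Set.singleton_subset_iff]
      show cfcₙHom (R := ℝ) ha (ContinuousMapZero.id (quasispectrum ℝ a)) ∈ S'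
      have hid : (ContinuousMapZero.id (quasispectrum ℝ a) : ContinuousMapZero (quasispectrum ℝ a) ℝ) =
          ⟨(ContinuousMap.id ℝ).restrict (quasispectrum ℝ a), rfl⟩ := rfl
      rw [cfcₙHom_id (R := ℝ) ha]
      exact haS
    exact fun x hx => hle hx
  have hdense := (ContinuousMapZero.adjoin_id_dense (quasispectrum ℝ a)).closure_eq
  have hf : f ∈ closure (NonUnitalStarAlgebra.adjoin ℝ
      {(ContinuousMapZero.id (quasispectrum ℝ a) : ContinuousMapZero (quasispectrum ℝ a) ℝ)} : Set _) := by
    rw [hdense]; trivial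
  exact closure_minimal hadj hcl hf

lemma cfcn_mem (S : NonUnitalStarSubalgebra ℂ A) (hS : IsClosed (S : Set A))
    {a : A} (haS : a ∈ S) (ha : IsSelfAdjoint a) {f : ℝ → ℝ}
    (hf : ContinuousOn f (quasispectrum ℝ a)) (hf0 : f 0 = 0) :
    cfcₙ f a ∈ S := by
  rw [cfcₙ_apply f a hf hf0]
  exact cfcnHom_mem S hS haS ha _

lemma posPart_mem (S : NonUnitalStarSubalgebra ℂ A) (hS : IsClosed (S : Set A))
    {a : A} (haS : a ∈ S) (ha : IsSelfAdjoint a) : a⁺ ∈ S := by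
  rw [CFC.posPart_def]
  refine cfcn_mem S hS haS ha ?_ (by simp)
  have : Continuous (fun r : ℝ => r⁺) := by
    simp only [_root_.posPart_def]
    exact continuous_id.max continuous_const
  exact this.continuousOn

lemma negPart_mem (S : NonUnitalStarSubalgebra ℂ A) (hS : IsClosed (S : Set A))
    {a : A} (haS : a ∈ S) (ha : IsSelfAdjoint a) : a⁻ ∈ S := by
  rw [CFC.negPart_def]
  refine cfcn_mem S hS haS ha ?_ (by simp)
  have : Continuous (fun r : ℝ => r⁻) := by
    simp only [_root_.negPart_def]
    exact continuous_neg.max continuous_const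
  exact this.continuousOn

lemma sqrt_mem (S : NonUnitalStarSubalgebra ℂ A) (hS : IsClosed (S : Set A))
    {a : A} (haS : a ∈ S) (ha : 0 ≤ a) : CFC.sqrt a ∈ S := by
  have h1 : CFC.sqrt a = cfcₙ (fun x : ℝ => (NNReal.sqrt x.toNNReal : ℝ)) a := by
    rw [CFC.sqrt]
    exact cfcₙ_nnreal_eq_real NNReal.sqrt a ha
  rw [h1]
  refine cfcn_mem S hS haS ha.isSelfAdjoint ?_ (by simp)
  exact (NNReal.continuous_coe.comp (NNReal.sqrt.continuous.comp
    continuous_real_toNNReal)).continuousOn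

end Aux

/-- a positive linear map between sub-C*-algebras which maps normalizers to
normalizers maps `D_A` into `D_B`, provided `(D_B ⊆ B)` is nondegenerate. -/
theorem positive_normalizer_preserving_maps_subalgebra
    {A B : Type*} [NonUnitalCStarAlgebra A] [NonUnitalCStarAlgebra B]
    [PartialOrder A] [StarOrderedRing A] [PartialOrder B] [StarOrderedRing B]
    (DA : NonUnitalStarSubalgebra ℂ A) (hDA : IsClosed (DA : Set A))
    (DB : NonUnitalStarSubalgebra ℂ B) (hDB : IsClosed (DB : Set B))
    (hunit : ∃ (ι : Type) (l : Filter ι) (u : ι → B), l.NeBot ∧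
      (∀ i, u i ∈ DB ∧ 0 ≤ u i ∧ ‖u i‖ ≤ 1) ∧
      ∀ x : B, Tendsto (fun i => ‖u i * x - x‖) l (𝓝 0))
    (φ : A →ₗ[ℂ] B) (hpos : ∀ a : A, 0 ≤ a → 0 ≤ φ a)
    (hφ : ∀ a : A, (∀ d ∈ DA, star a * d * a ∈ DA ∧ a * d * star a ∈ DA) →
      (∀ d ∈ DB, star (φ a) * d * φ a ∈ DB ∧ φ a * d * star (φ a) ∈ DB)) :
    ∀ d ∈ DA, φ d ∈ DB := by
  -- Step 1: positive elements of `DA` are mapped into `DB`.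
  have key : ∀ p ∈ DA, 0 ≤ p → φ p ∈ DB := by
    intro p hp hppos
    set b := φ p with hbdef
    have hb : 0 ≤ b := hpos p hppos
    have hbsa : star b = b := hb.isSelfAdjoint.star_eq
    have hnorm := hφ p (fun e he => ⟨mul_mem (mul_mem (star_mem hp) he) hp,
      mul_mem (mul_mem hp he) (star_mem hp)⟩)
    obtain ⟨ι, l, u, hne, hu, hlim⟩ := hunit
    haveI := hne
    have h1 : Tendsto (fun i => u i * b) l (𝓝 b) :=
      tendsto_iff_norm_sub_tendsto_zero.mpr (hlim b)
    have h2 : Tendsto (fun i => star b * (u i * b)) l (𝓝 (star b * b)) :=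
      h1.const_mul (star b)
    have hmem : ∀ i, star b * (u i * b) ∈ DB := fun i => by
      rw [← mul_assoc]; exact (hnorm (u i) (hu i).1).1
    have hsq : b * b ∈ DB := by
      have := hDB.mem_of_tendsto h2 (Eventually.of_forall hmem)
      rwa [hbsa] at this
    have hbb : 0 ≤ b * b := by
      have := star_mul_self_nonneg b
      rwa [hbsa] at this
    have hsqrt : CFC.sqrt (b * b) = b := CFC.sqrt_mul_self b hb
    rw [← hsqrt]
    exact sqrt_mem DB hDB hsq hbb
  intro d hd
  -- decompose `d` into selfadjoint parts
  set x : A := (2⁻¹ : ℂ) • (d + star d) with hxdef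
  set y : A := (-(Complex.I) * 2⁻¹) • (d - star d) with hydef
  have hxDA : x ∈ DA := SMulMemClass.smul_mem _ (add_mem hd (star_mem hd))
  have hyDA : y ∈ DA := SMulMemClass.smul_mem _ (sub_mem hd (star_mem hd))
  have hxsa : IsSelfAdjoint x := by
    simp only [hxdef, IsSelfAdjoint, star_smul, star_add, star_star, Complex.star_def,
      map_inv₀, Complex.conj_ofNat]
    rw [add_comm]
  have hysa : IsSelfAdjoint y := by
    simp only [hydef, IsSelfAdjoint, star_smul, star_sub, star_star, Complex.star_def,
      map_mul, map_neg, map_inv₀, Complex.conj_I, Complex.conj_ofNat]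
    rw [show (star d - d) = -(d - star d) by rw [neg_sub], smul_neg, ← neg_smul]
    norm_num
  have hdecomp : d = x + Complex.I • y := by
    rw [hxdef, hydef, smul_smul]
    rw [show Complex.I * (-(Complex.I) * 2⁻¹) = (2⁻¹ : ℂ) by
      rw [← mul_assoc, mul_neg, Complex.I_mul_I, neg_neg, one_mul]]
    rw [← smul_add]
    rw [show d + star d + (d - star d) = d + d by abel]
    rw [← two_smul ℂ d, smul_smul]
    norm_num
  have hx : d = (x⁺ - x⁻) + Complex.I • (y⁺ - y⁻) := by
    rw [CFC.posPart_sub_negPart x hxsa, CFC.posPart_sub_negPart y hysa]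
    exact hdecomp
  rw [hx, map_add, map_smul, map_sub, map_sub]
  exact add_mem (sub_mem
      (key _ (posPart_mem DA hDA hxDA hxsa) (CFC.posPart_nonneg x))
      (key _ (negPart_mem DA hDA hxDA hxsa) (CFC.negPart_nonneg x)))
    (SMulMemClass.smul_mem _ (sub_mem
      (key _ (posPart_mem DA hDA hyDA hysa) (CFC.posPart_nonneg y))
      (key _ (negPart_mem DA hDA hyDA hysa) (CFC.negPart_nonneg y))))
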